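/- Under the assumptions on X above, for all ξ ∈ ℝ^d and t ∈ (0,1), |φ_t(ξ) − 1| ≤ C·t·(‖ξ‖·‖EX‖ + ‖ξ‖ + ‖ξ‖²) for some constant C > 0 independent of ξ and t, where φ_t(ξ) = φ(ξ)/φ(e^{−t}ξ). -/

import Mathlib

set_option maxHeartbeats 1000000
set_option synthInstance.maxHeartbeats 400000
open scoped ENNReal


open MeasureTheory
open scoped RealInnerProductSpace

noncomputable def charFn {d : ℕ} (μ : Measure (EuclideanSpace ℝ (Fin d)))
    (ξ : EuclideanSpace ℝ (Fin d)) : ℂ :=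
  ∫ x, Complex.exp ((⟪ξ, x⟫ : ℂ) * Complex.I) ∂μ

/-- The setup of the paper: a non-degenerate self-decomposable law `μ` on `ℝ^d`, without
Gaussian component, with finite first moment, whose Lévy measure `ν` has polar decomposition
`ν(B) = ∫_{S^{d-1}} λ(dx) ∫_0^∞ 1_B(r x) k_x(r) dr/r` with `k_x(r)` nonincreasing in `r` and
locally bounded, uniformly in `x`. -/
structure SelfDecSetup (d : ℕ) where
  μ : Measure (EuclideanSpace ℝ (Fin d))
  prob : IsProbabilityMeasure μ
  ν : Measure (EuclideanSpace ℝ (Fin d))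
  sigmaFin : SigmaFinite ν
  lam : Measure (Metric.sphere (0 : EuclideanSpace ℝ (Fin d)) 1)
  lamProb : IsProbabilityMeasure lam
  k : Metric.sphere (0 : EuclideanSpace ℝ (Fin d)) 1 → ℝ → ℝ
  k_nonneg : ∀ x r, 0 < r → 0 ≤ k x r
  k_antitone : ∀ x r s, 0 < r → r ≤ s → k x s ≤ k x r
  /-- `ν` is a Lévy measure. -/
  levy_zero : ν {0} = 0
  levy_fin : ∫⁻ u, ENNReal.ofReal (min 1 (‖u‖ ^ 2)) ∂ν < ⊤
  /-- polar decomposition of `ν`. -/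
  polar : ∀ B : Set (EuclideanSpace ℝ (Fin d)), MeasurableSet B →
    ν B = ∫⁻ x, (∫⁻ r in Set.Ioi (0 : ℝ),
      ENNReal.ofReal (Set.indicator B (fun _ => k x r / r)
        (r • (x : EuclideanSpace ℝ (Fin d))))) ∂lam
  /-- local boundedness of `k`, uniformly in `x` (condition (3.2) of the paper). -/
  k_loc_bdd : ∀ a b : ℝ, 0 < a → a < b → ∃ M : ℝ, ∀ x, ∀ r ∈ Set.Ioo a b, k x r ≤ M
  /-- finite first moment. -/
  mom1 : Integrable (fun x => ‖x‖) μ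
  /-- Lévy–Khintchine representation with no Gaussian component (finite-mean form). -/
  LK : ∀ ξ, charFn μ ξ = Complex.exp ((⟪ξ, ∫ x, x ∂μ⟫ : ℂ) * Complex.I +
    ∫ u, (Complex.exp ((⟪ξ, u⟫ : ℂ) * Complex.I) - 1 - (⟪ξ, u⟫ : ℂ) * Complex.I) ∂ν)
  /-- self-decomposability. -/
  selfdec : ∀ γ : ℝ, γ ∈ Set.Ioo (0 : ℝ) 1 →
    ∃ ρ : Measure (EuclideanSpace ℝ (Fin d)), IsProbabilityMeasure ρ ∧
      ∀ ξ, charFn μ ξ = charFn μ (γ • ξ) * charFn ρ ξ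
  /-- non-degeneracy: the law is not supported on an affine hyperplane. -/
  nondeg : ∀ v : EuclideanSpace ℝ (Fin d), v ≠ 0 → ∀ c : ℝ, μ {x | ⟪v, x⟫ = c} < 1



section CharFnAux
open Complex

private lemma myCF_norm_exp_sub_one_le_two (x : ℝ) : ‖Complex.exp (x * I) - 1‖ ≤ 2 := by
  calc ‖Complex.exp (x * I) - 1‖ ≤ ‖Complex.exp (x * I)‖ + ‖(1:ℂ)‖ := norm_sub_le _ _
  _ ≤ 2 := by rw [Complex.norm_exp_ofReal_mul_I]; norm_num

private lemma myCF_norm_exp_sub_one_le_abs (x : ℝ) : ‖Complex.exp (x * I) - 1‖ ≤ |x| := by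
  have hre : (Complex.exp (x * I) - 1).re = Real.cos x - 1 := by
    simp [Complex.exp_ofReal_mul_I_re]
  have him : (Complex.exp (x * I) - 1).im = Real.sin x := by
    simp [Complex.exp_ofReal_mul_I_im]
  have hsq : ‖Complex.exp (x * I) - 1‖ ^ 2 = (Real.cos x - 1)^2 + (Real.sin x)^2 := by
    rw [Complex.sq_norm, Complex.normSq_apply, hre, him]; ring
  have h1 : Real.cos (x/2) ^ 2 = 1/2 + Real.cos x / 2 := by
    have := Real.cos_sq (x/2); rwa [mul_div_cancel₀ x (two_ne_zero)] at this
  have h1' : Real.sin (x/2) ^ 2 = 1/2 - Real.cos x / 2 := by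
    have := Real.sin_sq_add_cos_sq (x/2); linarith
  have h2 : |Real.sin (x/2)| ≤ |x/2| := Real.abs_sin_le_abs
  have h3 : (Real.sin (x/2))^2 ≤ (x/2)^2 := by
    nlinarith [_root_.sq_abs (Real.sin (x/2)), _root_.sq_abs (x/2), abs_nonneg (Real.sin (x/2)), abs_nonneg (x/2)]
  have h4 : ‖Complex.exp (x * I) - 1‖ ^ 2 ≤ x^2 := by
    have := Real.sin_sq_add_cos_sq x
    nlinarith
  have h5 : (0:ℝ) ≤ ‖Complex.exp (x * I) - 1‖ := norm_nonneg _
  nlinarith [abs_nonneg x, _root_.sq_abs x]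

private lemma myCF_norm_g_le (x : ℝ) :
    ‖Complex.exp (x * I) - 1 - x * I‖ ≤ 3 * min (x^2) |x| := by
  rcases le_total |x| 1 with h | h
  · have m1 : min (x^2) |x| = x^2 :=
      min_eq_left (by nlinarith [_root_.sq_abs x, abs_nonneg x])
    have h2 : ‖(↑x * I)‖ ≤ 1 := by
      rwa [norm_mul, Complex.norm_I, mul_one, Complex.norm_real, Real.norm_eq_abs]
    have := Complex.norm_exp_sub_one_sub_id_le h2
    rw [norm_mul, Complex.norm_I, mul_one, Complex.norm_real, Real.norm_eq_abs] at this
    rw [m1]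
    nlinarith [_root_.sq_abs x, norm_nonneg (Complex.exp (↑x * I) - 1 - ↑x * I)]
  · have m1 : min (x^2) |x| = |x| :=
      min_eq_right (by nlinarith [_root_.sq_abs x, abs_nonneg x])
    have h3 : ‖Complex.exp (x * I) - 1 - x * I‖ ≤ ‖Complex.exp (x * I) - 1‖ + ‖(x:ℂ) * I‖ :=
      norm_sub_le _ _
    have h4 : ‖(x:ℂ) * I‖ = |x| := by
      rw [norm_mul, Complex.norm_I, mul_one, Complex.norm_real, Real.norm_eq_abs]
    have := myCF_norm_exp_sub_one_le_two x
    rw [m1]; linarith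

private lemma myCF_norm_g_diff_le (x γ : ℝ) (h0 : 0 ≤ γ) (h1 : γ ≤ 1) :
    ‖(Complex.exp (x * I) - 1 - x * I) -
      (Complex.exp ((γ*x : ℝ) * I) - 1 - (γ*x : ℝ) * I)‖ ≤ 5 * (1-γ) * min (x^2) |x| := by
  set δ := 1 - γ with hδ
  have hδ0 : 0 ≤ δ := by simp [hδ]; linarith
  have key : (Complex.exp (x * I) - 1 - x * I) -
      (Complex.exp ((γ*x : ℝ) * I) - 1 - (γ*x : ℝ) * I)
      = Complex.exp ((γ*x : ℝ) * I) * (Complex.exp ((δ*x : ℝ) * I) - 1 - (δ*x : ℝ) * I)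
        + ((δ*x : ℝ) * I) * (Complex.exp ((γ*x : ℝ) * I) - 1) := by
    have hexp : Complex.exp ((x:ℝ) * I) =
        Complex.exp ((γ*x : ℝ) * I) * Complex.exp ((δ*x : ℝ) * I) := by
      rw [← Complex.exp_add]; congr 1; push_cast [hδ]; ring
    rw [hexp]; push_cast [hδ]; ring
  rw [key]
  have hb1 : ‖Complex.exp ((γ*x : ℝ) * I) * (Complex.exp ((δ*x : ℝ) * I) - 1 - (δ*x : ℝ) * I)‖
      ≤ 3 * min ((δ*x)^2) |δ*x| := by
    rw [norm_mul, Complex.norm_exp_ofReal_mul_I, one_mul]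
    exact myCF_norm_g_le (δ*x)
  have hb2 : ‖((δ*x : ℝ) * I) * (Complex.exp ((γ*x : ℝ) * I) - 1)‖
      ≤ |δ*x| * min 2 |γ*x| := by
    rw [norm_mul]
    have h4 : ‖((δ*x:ℝ):ℂ) * I‖ = |δ*x| := by
      rw [norm_mul, Complex.norm_I, mul_one, Complex.norm_real, Real.norm_eq_abs]
    rw [h4]
    exact mul_le_mul_of_nonneg_left
      (le_min (myCF_norm_exp_sub_one_le_two _) (myCF_norm_exp_sub_one_le_abs _)) (abs_nonneg _)
  have htri := norm_add_le (Complex.exp ((γ*x : ℝ) * I) * (Complex.exp ((δ*x : ℝ) * I) - 1 - (δ*x : ℝ) * I))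
      (((δ*x : ℝ) : ℂ) * I * (Complex.exp ((γ*x : ℝ) * I) - 1))
  have habs1 : |δ*x| = δ * |x| := by rw [abs_mul, _root_.abs_of_nonneg hδ0]
  have habs2 : |γ*x| = γ * |x| := by rw [abs_mul, _root_.abs_of_nonneg h0]
  have hreal : 3 * min ((δ*x)^2) |δ*x| + |δ*x| * min 2 |γ*x| ≤ 5 * δ * min (x^2) |x| := by
    rcases le_total |x| 1 with h | h
    · have m1 : min (x^2) |x| = x^2 :=
        min_eq_left (by nlinarith [_root_.sq_abs x, abs_nonneg x])
      have hδx1 : |δ*x| ≤ 1 := by rw [habs1]; nlinarith [abs_nonneg x]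
      have m2 : min ((δ*x)^2) |δ*x| = (δ*x)^2 :=
        min_eq_left (by nlinarith [_root_.sq_abs (δ*x), abs_nonneg (δ*x)])
      have hm3 : min 2 |γ*x| ≤ |γ*x| := min_le_right _ _
      have t1 : |δ*x| * min 2 |γ*x| ≤ |δ*x| * |γ*x| :=
        mul_le_mul_of_nonneg_left hm3 (abs_nonneg _)
      have t2 : |δ*x| * |γ*x| = δ * γ * x^2 := by
        rw [habs1, habs2]; linear_combination (δ*γ) * _root_.sq_abs x
      have e1 : (δ*x)^2 = δ*x^2 - δ*γ*x^2 := by simp only [hδ]; ring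
      have nn1 : 0 ≤ δ*γ*x^2 := by positivity
      have nn2 : 0 ≤ δ*x^2 := by positivity
      rw [m1, m2]
      linarith
    · have m1 : min (x^2) |x| = |x| :=
        min_eq_right (by nlinarith [_root_.sq_abs x, abs_nonneg x])
      have hm2 : min ((δ*x)^2) |δ*x| ≤ |δ*x| := min_le_right _ _
      have hm3 : min 2 |γ*x| ≤ 2 := min_le_left _ _
      have t1 : |δ*x| * min 2 |γ*x| ≤ |δ*x| * 2 :=
        mul_le_mul_of_nonneg_left hm3 (abs_nonneg _)
      rw [m1]
      nlinarith [t1, hm2, habs1, abs_nonneg x, mul_nonneg hδ0 (abs_nonneg x)]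
  calc _ ≤ _ := htri
  _ ≤ 3 * min ((δ*x)^2) |δ*x| + |δ*x| * min 2 |γ*x| := add_le_add hb1 hb2
  _ ≤ 5 * δ * min (x^2) |x| := hreal
  _ = 5 * (1-γ) * min (x^2) |x| := by rw [hδ]

private lemma myCF_abs_le_norm_g_add_one (x : ℝ) :
    |x| ≤ ‖Complex.exp (x * I) - 1 - x * I‖ + 1 := by
  have him : (Complex.exp (x * I) - 1 - x * I).im = Real.sin x - x := by
    simp [Complex.exp_ofReal_mul_I_im]
  have h1 : |Real.sin x - x| ≤ ‖Complex.exp (x * I) - 1 - x * I‖ := by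
    rw [← him]; exact Complex.abs_im_le_norm _
  have h2 : |Real.sin x| ≤ 1 := Real.abs_sin_le_one x
  calc |x| = |(x - Real.sin x) + Real.sin x| := by ring_nf
  _ ≤ |x - Real.sin x| + |Real.sin x| := abs_add_le _ _
  _ ≤ ‖Complex.exp (x * I) - 1 - x * I‖ + 1 := by rw [abs_sub_comm]; exact add_le_add h1 h2

end CharFnAux

/-- In the self-decomposable setup, with `φ_t(ξ) = φ(ξ)/φ(e^{-t}ξ)` the
characteristic function of `X_t`, there is `C > 0` independent of `ξ` and `t` such that
`|φ_t(ξ) - 1| ≤ C t (‖ξ‖‖E X‖ + ‖ξ‖ + ‖ξ‖²)` for all `ξ ∈ ℝ^d` and `t ∈ (0,1)`. -/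


theorem charFn_Xt_near_one (d : ℕ) (S : SelfDecSetup d)
    (μt : ℝ → Measure (EuclideanSpace ℝ (Fin d)))
    (hprob : ∀ t : ℝ, 0 < t → IsProbabilityMeasure (μt t))
    (hchar : ∀ t : ℝ, 0 < t →
      ∀ ξ, charFn S.μ ξ = charFn S.μ (Real.exp (-t) • ξ) * charFn (μt t) ξ) :
    ∃ C : ℝ, 0 < C ∧ ∀ ξ : EuclideanSpace ℝ (Fin d), ∀ t ∈ Set.Ioo (0 : ℝ) 1,
      ‖charFn (μt t) ξ - 1‖ ≤
        C * t * (‖ξ‖ * ‖∫ x, x ∂S.μ‖ + ‖ξ‖ + ‖ξ‖ ^ 2) := by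
  classical
  set ν := S.ν with hν_def
  have levy_fin : ∫⁻ u, ENNReal.ofReal (min 1 (‖u‖ ^ 2)) ∂ν < ⊤ := S.levy_fin
  set s : Set (EuclideanSpace ℝ (Fin d)) := {u | 1 < ‖u‖} with hs_def
  have hsm : MeasurableSet s := by
    have : IsOpen s := isOpen_lt continuous_const continuous_norm
    exact this.measurableSet
  have hinner_cont : ∀ ξ : EuclideanSpace ℝ (Fin d), Continuous fun u => (⟪ξ, u⟫ : ℝ) :=
    fun ξ => continuous_const.inner continuous_id
  have hmeas_abs : ∀ ξ : EuclideanSpace ℝ (Fin d),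
      Measurable fun u => ENNReal.ofReal |⟪ξ, u⟫| :=
    fun ξ => ((hinner_cont ξ).abs.measurable).ennreal_ofReal
  set q : EuclideanSpace ℝ (Fin d) → ℝ≥0∞ :=
    fun ξ => ∫⁻ u in s, ENNReal.ofReal |⟪ξ, u⟫| ∂ν with hq_def
  -- ν s finite
  have hνs : ν s < ⊤ := by
    have h1 : ν s = ∫⁻ u in s, ENNReal.ofReal (min 1 (‖u‖ ^ 2)) ∂ν := by
      rw [← setLIntegral_one]
      refine setLIntegral_congr_fun hsm (fun u hu => ?_)
      have : ‖u‖ > 1 := hu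
      have h2 : min 1 (‖u‖^2) = 1 := min_eq_left (by nlinarith)
      rw [h2, ENNReal.ofReal_one]
    rw [h1]
    exact lt_of_le_of_lt (setLIntegral_le_lintegral _ _) levy_fin
  -- B finite
  set Bl : ℝ≥0∞ := ∫⁻ u in sᶜ, ENNReal.ofReal (‖u‖^2) ∂ν with hBl_def
  have hBfin : Bl < ⊤ := by
    have h1 : Bl ≤ ∫⁻ u in sᶜ, ENNReal.ofReal (min 1 (‖u‖ ^ 2)) ∂ν := by
      refine setLIntegral_mono_ae (by fun_prop) (ae_of_all _ fun u hu => ?_)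
      have h2 : ¬ (1 < ‖u‖) := hu
      push_neg at h2
      have : min 1 (‖u‖^2) = ‖u‖^2 := min_eq_right (by nlinarith [norm_nonneg u])
      rw [this]
    exact lt_of_le_of_lt (h1.trans (setLIntegral_le_lintegral _ _)) levy_fin
  -- q subadditive etc
  have hq_zero : q 0 = 0 := by
    simp [hq_def]
  have hq_add : ∀ ξ η, q (ξ + η) ≤ q ξ + q η := by
    intro ξ η
    rw [hq_def]
    calc ∫⁻ u in s, ENNReal.ofReal |⟪ξ + η, u⟫| ∂ν
        ≤ ∫⁻ u in s, (ENNReal.ofReal |⟪ξ, u⟫| + ENNReal.ofReal |⟪η, u⟫|) ∂ν := by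
          refine lintegral_mono fun u => ?_
          rw [← ENNReal.ofReal_add (abs_nonneg _) (abs_nonneg _)]
          refine ENNReal.ofReal_le_ofReal ?_
          rw [inner_add_left]
          exact abs_add_le _ _
      _ = q ξ + q η := lintegral_add_left ((hmeas_abs ξ)) _
  have hq_smul : ∀ (c : ℝ) ξ, q (c • ξ) = ENNReal.ofReal |c| * q ξ := by
    intro c ξ
    rw [hq_def]
    simp only [real_inner_smul_left, abs_mul, ENNReal.ofReal_mul (abs_nonneg c)]
    exact lintegral_const_mul _ (hmeas_abs ξ)
  -- the subspace where q is finite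
  set G : Submodule ℝ (EuclideanSpace ℝ (Fin d)) :=
    { carrier := {ξ | q ξ < ⊤}
      add_mem' := fun {a b} ha hb => lt_of_le_of_lt (hq_add a b) (ENNReal.add_lt_top.mpr ⟨ha, hb⟩)
      zero_mem' := by simp [Set.mem_setOf_eq, hq_zero]
      smul_mem' := by
        intro c x hx
        simp only [Set.mem_setOf_eq] at *
        rw [hq_smul]
        exact ENNReal.mul_lt_top ENNReal.ofReal_lt_top hx } with hG_def
  have hKex : ∃ K : ℝ, 0 ≤ K ∧ ∀ ξ, q ξ < ⊤ → q ξ ≤ ENNReal.ofReal (K * ‖ξ‖) := by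
    haveI : FiniteDimensional ℝ G := inferInstance
    set n := Module.finrank ℝ G with hn
    set b : Module.Basis (Fin n) ℝ G := Module.finBasis ℝ G with hb
    set L : Fin n → (G →L[ℝ] ℝ) :=
      fun i => LinearMap.toContinuousLinearMap (b.coord i) with hL
    set M : Fin n → ℝ := fun i => (q ((b i : G) : EuclideanSpace ℝ (Fin d))).toReal with hM
    have hMnn : ∀ i, 0 ≤ M i := fun i => ENNReal.toReal_nonneg
    have hqbi : ∀ i, q ((b i : G) : EuclideanSpace ℝ (Fin d)) < ⊤ := fun i => (b i).2
    refine ⟨∑ i, ‖L i‖ * M i, Finset.sum_nonneg fun i _ => mul_nonneg (ContinuousLinearMap.opNorm_nonneg _) (hMnn i), ?_⟩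
    intro ξ hξ
    set x : G := ⟨ξ, hξ⟩ with hx
    have hrepr : ξ = ∑ i, b.repr x i • ((b i : G) : EuclideanSpace ℝ (Fin d)) := by
      have h1 : (x : EuclideanSpace ℝ (Fin d)) = G.subtype (∑ i, b.repr x i • b i) := by
        rw [b.sum_repr x]; rfl
      rw [show ξ = (x : EuclideanSpace ℝ (Fin d)) from rfl, h1, map_sum]
      simp
    have h2 : q ξ ≤ ∑ i, q (b.repr x i • ((b i : G) : EuclideanSpace ℝ (Fin d))) := by
      rw [hrepr]
      exact Finset.le_sum_of_subadditive q hq_zero.le hq_add _ _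
    have h3 : ∀ i, q (b.repr x i • ((b i : G) : EuclideanSpace ℝ (Fin d)))
        = ENNReal.ofReal (|b.repr x i| * M i) := by
      intro i
      rw [hq_smul, ENNReal.ofReal_mul (abs_nonneg _)]
      congr 1
      rw [hM]
      exact (ENNReal.ofReal_toReal (hqbi i).ne).symm
    have h4 : ∀ i, |b.repr x i| ≤ ‖L i‖ * ‖ξ‖ := by
      intro i
      have : |b.repr x i| = ‖L i x‖ := by
        simp only [hL, LinearMap.coe_toContinuousLinearMap', Module.Basis.coord_apply, Real.norm_eq_abs]
      rw [this]
      have := (L i).le_opNorm x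
      simpa using this
    calc q ξ ≤ ∑ i, q (b.repr x i • ((b i : G) : EuclideanSpace ℝ (Fin d))) := h2
      _ = ∑ i, ENNReal.ofReal (|b.repr x i| * M i) := by simp_rw [h3]
      _ = ENNReal.ofReal (∑ i, |b.repr x i| * M i) :=
          (ENNReal.ofReal_sum_of_nonneg fun i _ => mul_nonneg (abs_nonneg _) (hMnn i)).symm
      _ ≤ ENNReal.ofReal ((∑ i, ‖L i‖ * M i) * ‖ξ‖) := by
          refine ENNReal.ofReal_le_ofReal ?_
          rw [Finset.sum_mul]
          refine Finset.sum_le_sum fun i _ => ?_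
          calc |b.repr x i| * M i ≤ (‖L i‖ * ‖ξ‖) * M i :=
                mul_le_mul_of_nonneg_right (h4 i) (hMnn i)
            _ = ‖L i‖ * M i * ‖ξ‖ := by ring
  -- the integrand f
  set f : EuclideanSpace ℝ (Fin d) → EuclideanSpace ℝ (Fin d) → ℂ := fun ξ u =>
    Complex.exp ((⟪ξ, u⟫ : ℂ) * Complex.I) - 1 - (⟪ξ, u⟫ : ℂ) * Complex.I with hf_def
  have hf_cont : ∀ ξ, Continuous (f ξ) := by
    intro ξ
    apply Continuous.sub
    apply Continuous.sub
    · exact Complex.continuous_exp.comp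
        ((Complex.continuous_ofReal.comp (hinner_cont ξ)).mul continuous_const)
    · exact continuous_const
    · exact (Complex.continuous_ofReal.comp (hinner_cont ξ)).mul continuous_const
  have hf_meas : ∀ ξ, AEStronglyMeasurable (f ξ) ν := fun ξ => (hf_cont ξ).aestronglyMeasurable
  have hnormf_meas : ∀ ξ, Measurable fun u => ENNReal.ofReal ‖f ξ u‖ :=
    fun ξ => ((hf_cont ξ).norm.measurable).ennreal_ofReal
  have hmin_meas : ∀ ξ : EuclideanSpace ℝ (Fin d),
      Measurable fun u => ENNReal.ofReal (min ((⟪ξ, u⟫ : ℝ)^2) |⟪ξ, u⟫|) := by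
    intro ξ
    exact ((((hinner_cont ξ).pow 2).min (hinner_cont ξ).abs).measurable).ennreal_ofReal
  -- domination
  have hdom : ∀ ξ : EuclideanSpace ℝ (Fin d),
      ∫⁻ u, ENNReal.ofReal (min ((⟪ξ, u⟫ : ℝ)^2) |⟪ξ, u⟫|) ∂ν
        ≤ ENNReal.ofReal (‖ξ‖^2) * Bl + q ξ := by
    intro ξ
    rw [← lintegral_add_compl (fun u => ENNReal.ofReal (min ((⟪ξ, u⟫ : ℝ)^2) |⟪ξ, u⟫|)) hsm]
    have hpart1 : ∫⁻ u in s, ENNReal.ofReal (min ((⟪ξ, u⟫ : ℝ)^2) |⟪ξ, u⟫|) ∂ν ≤ q ξ :=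
      lintegral_mono fun u => ENNReal.ofReal_le_ofReal (min_le_right _ _)
    have hpart2 : ∫⁻ u in sᶜ, ENNReal.ofReal (min ((⟪ξ, u⟫ : ℝ)^2) |⟪ξ, u⟫|) ∂ν
        ≤ ENNReal.ofReal (‖ξ‖^2) * Bl := by
      have hpw : ∀ u : EuclideanSpace ℝ (Fin d),
          ENNReal.ofReal (min ((⟪ξ, u⟫ : ℝ)^2) |⟪ξ, u⟫|)
            ≤ ENNReal.ofReal (‖ξ‖^2) * ENNReal.ofReal (‖u‖^2) := by
        intro u
        rw [← ENNReal.ofReal_mul (by positivity)]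
        refine ENNReal.ofReal_le_ofReal ?_
        have h1 : |⟪ξ, u⟫| ≤ ‖ξ‖ * ‖u‖ := abs_real_inner_le_norm ξ u
        have h2 : (⟪ξ, u⟫ : ℝ)^2 ≤ ‖ξ‖^2 * ‖u‖^2 := by
          nlinarith [_root_.sq_abs (⟪ξ, u⟫ : ℝ), abs_nonneg (⟪ξ, u⟫ : ℝ),
            mul_nonneg (norm_nonneg ξ) (norm_nonneg u)]
        exact le_trans (min_le_left _ _) h2
      calc ∫⁻ u in sᶜ, ENNReal.ofReal (min ((⟪ξ, u⟫ : ℝ)^2) |⟪ξ, u⟫|) ∂ν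
          ≤ ∫⁻ u in sᶜ, ENNReal.ofReal (‖ξ‖^2) * ENNReal.ofReal (‖u‖^2) ∂ν :=
            lintegral_mono hpw
        _ = ENNReal.ofReal (‖ξ‖^2) * Bl := by
            rw [hBl_def]
            exact lintegral_const_mul _ ((continuous_norm.pow 2).measurable.ennreal_ofReal)
    exact (add_le_add hpart1 hpart2).trans_eq (add_comm _ _)
  -- integrability from q
  have hFI_of_q : ∀ ξ, q ξ < ⊤ → Integrable (f ξ) ν := by
    intro ξ hq
    refine ⟨hf_meas ξ, ?_⟩
    rw [hasFiniteIntegral_iff_norm]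
    have h1 : ∫⁻ u, ENNReal.ofReal ‖f ξ u‖ ∂ν
        ≤ ∫⁻ u, ENNReal.ofReal 3 * ENNReal.ofReal (min ((⟪ξ, u⟫ : ℝ)^2) |⟪ξ, u⟫|) ∂ν := by
      refine lintegral_mono fun u => ?_
      rw [← ENNReal.ofReal_mul (by norm_num)]
      exact ENNReal.ofReal_le_ofReal (myCF_norm_g_le (⟪ξ, u⟫ : ℝ))
    rw [lintegral_const_mul _ (hmin_meas ξ)] at h1
    refine lt_of_le_of_lt h1 ?_
    refine ENNReal.mul_lt_top ENNReal.ofReal_lt_top ?_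
    refine lt_of_le_of_lt (hdom ξ) ?_
    exact ENNReal.add_lt_top.mpr ⟨ENNReal.mul_lt_top ENNReal.ofReal_lt_top hBfin, hq⟩
  -- q finite from integrability
  have hq_of_FI : ∀ ξ, Integrable (f ξ) ν → q ξ < ⊤ := by
    intro ξ hfint
    have h1 : q ξ ≤ ∫⁻ u in s, (ENNReal.ofReal ‖f ξ u‖ + 1) ∂ν := by
      refine lintegral_mono fun u => ?_
      calc ENNReal.ofReal |⟪ξ, u⟫| ≤ ENNReal.ofReal (‖f ξ u‖ + 1) :=
            ENNReal.ofReal_le_ofReal (myCF_abs_le_norm_g_add_one (⟪ξ, u⟫ : ℝ))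
        _ = ENNReal.ofReal ‖f ξ u‖ + 1 := by
            rw [ENNReal.ofReal_add (norm_nonneg _) zero_le_one, ENNReal.ofReal_one]
    have h2 : ∫⁻ u in s, (ENNReal.ofReal ‖f ξ u‖ + 1) ∂ν
        = (∫⁻ u in s, ENNReal.ofReal ‖f ξ u‖ ∂ν) + ν s := by
      rw [lintegral_add_left (hnormf_meas ξ), setLIntegral_one]
    have h3 : (∫⁻ u in s, ENNReal.ofReal ‖f ξ u‖ ∂ν) ≤ ∫⁻ u, ENNReal.ofReal ‖f ξ u‖ ∂ν :=
      setLIntegral_le_lintegral _ _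
    have h4 : ∫⁻ u, ENNReal.ofReal ‖f ξ u‖ ∂ν < ⊤ := by
      rw [← hasFiniteIntegral_iff_norm]; exact hfint.2
    calc q ξ ≤ _ := h1
      _ = _ := h2
      _ < ⊤ := ENNReal.add_lt_top.mpr ⟨lt_of_le_of_lt h3 h4, hνs⟩
  obtain ⟨K, hK0, hKb⟩ := hKex
  set B : ℝ := Bl.toReal with hB_def
  have hB0 : 0 ≤ B := ENNReal.toReal_nonneg
  refine ⟨2 + 10*B + 10*K, by linarith, ?_⟩
  intro ξ t ht
  obtain ⟨ht0, ht1⟩ := ht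
  set γ := Real.exp (-t) with hγ_def
  have hγ0 : 0 < γ := Real.exp_pos _
  have hγ1 : γ < 1 := by
    rw [hγ_def]
    have := Real.exp_lt_exp.mpr (show -t < 0 by linarith)
    rwa [Real.exp_zero] at this
  have hδ0 : 0 ≤ 1 - γ := by linarith
  have hδt : 1 - γ ≤ t := by
    have := Real.add_one_le_exp (-t); rw [hγ_def]; linarith
  set m : EuclideanSpace ℝ (Fin d) := ∫ x, x ∂S.μ with hm_def
  set ψ : EuclideanSpace ℝ (Fin d) → ℂ :=
    fun η => (⟪η, m⟫ : ℂ) * Complex.I + ∫ u, f η u ∂ν with hψ_def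
  have hφ : ∀ η, charFn S.μ η = Complex.exp (ψ η) := fun η => S.LK η
  set Δ : ℂ := ψ ξ - ψ (γ • ξ) with hΔ_def
  have hμt : charFn (μt t) ξ = Complex.exp Δ := by
    have h := hchar t ht0 ξ
    rw [← hγ_def] at h
    rw [hφ ξ, hφ (γ • ξ)] at h
    rw [hΔ_def, Complex.exp_sub, eq_div_iff (Complex.exp_ne_zero _)]
    linear_combination -h
  have hmod : ‖charFn (μt t) ξ‖ ≤ 1 := by
    haveI := hprob t ht0
    show ‖∫ x, Complex.exp ((⟪ξ, x⟫ : ℂ) * Complex.I) ∂(μt t)‖ ≤ 1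
    calc ‖∫ x, Complex.exp ((⟪ξ, x⟫ : ℂ) * Complex.I) ∂(μt t)‖
        ≤ 1 * ((μt t) Set.univ).toReal :=
          norm_integral_le_of_norm_le_const (ae_of_all _ fun x => by
            rw [Complex.norm_exp_ofReal_mul_I])
      _ = 1 := by rw [measure_univ]; simp
  have h2Δ : ‖charFn (μt t) ξ - 1‖ ≤ 2 * ‖Δ‖ := by
    rcases le_total ‖Δ‖ 1 with h | h
    · rw [hμt]
      have h2 := Complex.norm_exp_sub_one_le (x := Δ) h
      exact h2
    · calc ‖charFn (μt t) ξ - 1‖ ≤ ‖charFn (μt t) ξ‖ + ‖(1:ℂ)‖ := norm_sub_le _ _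
        _ ≤ 1 + 1 := by rw [norm_one]; exact add_le_add_left hmod _
        _ ≤ 2 * ‖Δ‖ := by linarith
  have hip : (⟪γ • ξ, m⟫ : ℝ) = γ * ⟪ξ, m⟫ := real_inner_smul_left _ _ _
  have hΔ_eq : Δ = (((1 - γ) * ⟪ξ, m⟫ : ℝ) : ℂ) * Complex.I
      + ((∫ u, f ξ u ∂ν) - (∫ u, f (γ • ξ) u ∂ν)) := by
    rw [hΔ_def]
    simp only [hψ_def, hip]
    push_cast
    ring
  have hXnn : (0:ℝ) ≤ ‖ξ‖ * ‖m‖ := mul_nonneg (norm_nonneg _) (norm_nonneg _)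
  have hYnn : (0:ℝ) ≤ ‖ξ‖^2 := sq_nonneg _
  have hZnn : (0:ℝ) ≤ ‖ξ‖ := norm_nonneg _
  have hfirst : ‖(((1 - γ) * ⟪ξ, m⟫ : ℝ) : ℂ) * Complex.I‖ ≤ (1-γ) * (‖ξ‖ * ‖m‖) := by
    rw [norm_mul, Complex.norm_I, mul_one, Complex.norm_real, Real.norm_eq_abs, abs_mul,
      _root_.abs_of_nonneg hδ0]
    exact mul_le_mul_of_nonneg_left (abs_real_inner_le_norm ξ m) hδ0
  by_cases hq : q ξ < ⊤
  · -- integrable case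
    have hqγ : q (γ • ξ) < ⊤ := by
      rw [hq_smul]; exact ENNReal.mul_lt_top ENNReal.ofReal_lt_top hq
    have hi1 := hFI_of_q ξ hq
    have hi2 := hFI_of_q (γ • ξ) hqγ
    have hsub : (∫ u, f ξ u ∂ν) - (∫ u, f (γ • ξ) u ∂ν) = ∫ u, (f ξ u - f (γ • ξ) u) ∂ν :=
      (integral_sub hi1 hi2).symm
    have hqKξ : q ξ ≤ ENNReal.ofReal (K * ‖ξ‖) := hKb ξ hq
    have h5γ : (0:ℝ) ≤ 5 * (1 - γ) := by linarith
    have hpw : ∀ u, ENNReal.ofReal ‖f ξ u - f (γ • ξ) u‖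
        ≤ ENNReal.ofReal (5 * (1-γ)) * ENNReal.ofReal (min ((⟪ξ, u⟫ : ℝ)^2) |⟪ξ, u⟫|) := by
      intro u
      rw [← ENNReal.ofReal_mul h5γ]
      refine ENNReal.ofReal_le_ofReal ?_
      have hip2 : (⟪γ • ξ, u⟫ : ℝ) = γ * ⟪ξ, u⟫ := real_inner_smul_left _ _ _
      have hgd := myCF_norm_g_diff_le (⟪ξ, u⟫ : ℝ) γ hγ0.le hγ1.le
      calc ‖f ξ u - f (γ • ξ) u‖
          = ‖(Complex.exp ((⟪ξ, u⟫ : ℝ) * Complex.I) - 1 - (⟪ξ, u⟫ : ℝ) * Complex.I) -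
              (Complex.exp ((γ * ⟪ξ, u⟫ : ℝ) * Complex.I) - 1
                - (γ * ⟪ξ, u⟫ : ℝ) * Complex.I)‖ := by rw [hf_def]; simp only [hip2]
        _ ≤ 5 * (1-γ) * min ((⟪ξ, u⟫ : ℝ)^2) |⟪ξ, u⟫| := hgd
    have hfin1 : ENNReal.ofReal (‖ξ‖^2) * Bl + ENNReal.ofReal (K * ‖ξ‖) ≠ ⊤ := by
      refine (ENNReal.add_lt_top.mpr ⟨?_, ENNReal.ofReal_lt_top⟩).ne
      exact ENNReal.mul_lt_top ENNReal.ofReal_lt_top hBfin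
    have hdiff : ‖∫ u, (f ξ u - f (γ • ξ) u) ∂ν‖ ≤ 5 * (1-γ) * (‖ξ‖^2 * B + K * ‖ξ‖) := by
      calc ‖∫ u, (f ξ u - f (γ • ξ) u) ∂ν‖
          ≤ (∫⁻ u, ENNReal.ofReal ‖f ξ u - f (γ • ξ) u‖ ∂ν).toReal :=
            norm_integral_le_lintegral_norm _
        _ ≤ (ENNReal.ofReal (5*(1-γ)) *
              (ENNReal.ofReal (‖ξ‖^2) * Bl + ENNReal.ofReal (K * ‖ξ‖))).toReal := by
            refine ENNReal.toReal_mono ?_ ?_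
            · exact (ENNReal.mul_lt_top ENNReal.ofReal_lt_top hfin1.lt_top).ne
            · calc ∫⁻ u, ENNReal.ofReal ‖f ξ u - f (γ • ξ) u‖ ∂ν
                  ≤ ∫⁻ u, ENNReal.ofReal (5*(1-γ)) *
                      ENNReal.ofReal (min ((⟪ξ, u⟫ : ℝ)^2) |⟪ξ, u⟫|) ∂ν := lintegral_mono hpw
                _ = ENNReal.ofReal (5*(1-γ)) *
                      ∫⁻ u, ENNReal.ofReal (min ((⟪ξ, u⟫ : ℝ)^2) |⟪ξ, u⟫|) ∂ν :=
                    lintegral_const_mul _ (hmin_meas ξ)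
                _ ≤ ENNReal.ofReal (5*(1-γ)) * (ENNReal.ofReal (‖ξ‖^2) * Bl + q ξ) :=
                    mul_le_mul_right (hdom ξ) _
                _ ≤ ENNReal.ofReal (5*(1-γ)) *
                      (ENNReal.ofReal (‖ξ‖^2) * Bl + ENNReal.ofReal (K * ‖ξ‖)) :=
                    mul_le_mul_right (add_le_add_right hqKξ _) _
        _ = 5 * (1-γ) * (‖ξ‖^2 * B + K * ‖ξ‖) := by
            rw [ENNReal.toReal_mul, ENNReal.toReal_ofReal h5γ,
              ENNReal.toReal_add (ENNReal.mul_lt_top ENNReal.ofReal_lt_top hBfin).ne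
                ENNReal.ofReal_lt_top.ne,
              ENNReal.toReal_mul, ENNReal.toReal_ofReal hYnn,
              ENNReal.toReal_ofReal (mul_nonneg hK0 hZnn), hB_def]
    have hΔn : ‖Δ‖ ≤ (1-γ) * (‖ξ‖ * ‖m‖) + 5*(1-γ)*(‖ξ‖^2 * B + K * ‖ξ‖) := by
      rw [hΔ_eq, hsub]
      exact le_trans (norm_add_le _ _) (add_le_add hfirst hdiff)
    refine le_trans h2Δ ?_
    nlinarith [mul_le_mul_of_nonneg_right hδt hXnn, mul_le_mul_of_nonneg_right hδt hYnn,
      mul_le_mul_of_nonneg_right hδt hZnn, mul_nonneg ht0.le hXnn, mul_nonneg ht0.le hYnn,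
      mul_nonneg ht0.le hZnn, hB0, hK0, hΔn, hδ0,
      mul_nonneg hB0 (mul_nonneg ht0.le hXnn), mul_nonneg hB0 (mul_nonneg ht0.le hYnn),
      mul_nonneg hB0 (mul_nonneg ht0.le hZnn), mul_nonneg hK0 (mul_nonneg ht0.le hXnn),
      mul_nonneg hK0 (mul_nonneg ht0.le hYnn), mul_nonneg hK0 (mul_nonneg ht0.le hZnn),
      mul_le_mul_of_nonneg_left (mul_le_mul_of_nonneg_right hδt hYnn) hB0,
      mul_le_mul_of_nonneg_left (mul_le_mul_of_nonneg_right hδt hZnn) hK0]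
  · -- non-integrable case
    have hqt : q ξ = ⊤ := by rwa [not_lt, top_le_iff] at hq
    have hqγt : q (γ • ξ) = ⊤ := by
      rw [hq_smul, hqt, ENNReal.mul_top]
      exact (ENNReal.ofReal_pos.mpr (abs_pos.mpr hγ0.ne')).ne'
    have hni1 : ¬ Integrable (f ξ) ν := fun h => by
      have := hq_of_FI ξ h; rw [hqt] at this; exact lt_irrefl ⊤ this
    have hni2 : ¬ Integrable (f (γ • ξ)) ν := fun h => by
      have := hq_of_FI (γ • ξ) h; rw [hqγt] at this; exact lt_irrefl ⊤ this
    have he1 : (∫ u, f ξ u ∂ν) = 0 := integral_undef hni1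
    have he2 : (∫ u, f (γ • ξ) u ∂ν) = 0 := integral_undef hni2
    have hΔn : ‖Δ‖ ≤ (1-γ) * (‖ξ‖ * ‖m‖) := by
      rw [hΔ_eq, he1, he2, sub_zero, add_zero]
      exact hfirst
    refine le_trans h2Δ ?_
    nlinarith [mul_le_mul_of_nonneg_right hδt hXnn, mul_nonneg ht0.le hXnn,
      mul_nonneg ht0.le hYnn, mul_nonneg ht0.le hZnn, hB0, hK0, hΔn,
      mul_nonneg hB0 (mul_nonneg ht0.le hXnn), mul_nonneg hB0 (mul_nonneg ht0.le hYnn),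
      mul_nonneg hB0 (mul_nonneg ht0.le hZnn), mul_nonneg hK0 (mul_nonneg ht0.le hXnn),
      mul_nonneg hK0 (mul_nonneg ht0.le hYnn), mul_nonneg hK0 (mul_nonneg ht0.le hZnn)]
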